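/- Let n = 5/2, q = 2, k < 0, and let c ∈ ℝ. Fix a sign ε ∈ {1, −1}. Then the function u(t,r) = ε·3(t + c − r²)/(r(3(t+c) + r²)·√(−2k)) is a solution of the semilinear radial heat equation u_t = u_rr + (3/2) r⁻¹ u_r + k u³ on any open subset of {(t,r) : r > 0, 3(t+c) + r² ≠ 0}. -/

import Mathlib

noncomputable section

def pdt (u : ℝ × ℝ → ℝ) (p : ℝ × ℝ) : ℝ := deriv (fun s => u (s, p.2)) p.1

def pdr (u : ℝ × ℝ → ℝ) (p : ℝ × ℝ) : ℝ := deriv (fun s => u (p.1, s)) p.2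

def pdrr (u : ℝ × ℝ → ℝ) (p : ℝ × ℝ) : ℝ :=
  deriv (fun s => deriv (fun s' => u (p.1, s')) s) p.2

/-- The semilinear radial heat equation for `n = 5/2`, `q = 2`:
`u_t = u_rr + (3/2) r⁻¹ u_r + k u³`. -/
def HeatEqCubic (k : ℝ) (u : ℝ × ℝ → ℝ) (p : ℝ × ℝ) : Prop :=
  pdt u p = pdrr u p + (3 / 2) * (p.2)⁻¹ * pdr u p + k * u p ^ 3

set_option maxHeartbeats 2000000 in
/-- the similarity exact solution
`u = ε 3(t+c-r²)/(r(3(t+c)+r²)√(-2k))` for `n = 5/2`, `q = 2`, `k < 0`. -/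
theorem exact_solution_similarity_a (k c e : ℝ) (hk : k < 0) (he : e = 1 ∨ e = -1)
    (D : Set (ℝ × ℝ)) (hD : IsOpen D)
    (hDsub : D ⊆ {p : ℝ × ℝ | 0 < p.2 ∧ 3 * (p.1 + c) + p.2 ^ 2 ≠ 0}) :
    ∀ p ∈ D,
      HeatEqCubic k (fun p : ℝ × ℝ =>
        e * (3 * (p.1 + c - p.2 ^ 2))
          / (p.2 * (3 * (p.1 + c) + p.2 ^ 2) * Real.sqrt (-2 * k))) p := by
  intro p hp
  obtain ⟨hrpos, hden⟩ := hDsub hp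
  obtain ⟨t, r⟩ := p
  simp only at hrpos hden
  set S : ℝ := Real.sqrt (-2 * k) with hSdef
  have hSpos : 0 < S := Real.sqrt_pos.mpr (by linarith)
  have hS0 : S ≠ 0 := ne_of_gt hSpos
  have hr0 : r ≠ 0 := ne_of_gt hrpos
  have hS2 : S ^ 2 = -2 * k := Real.sq_sqrt (by linarith)
  have hk0 : k ≠ 0 := ne_of_lt hk
  have he2 : e ^ 2 = 1 := by rcases he with h | h <;> rw [h] <;> norm_num
  -- abbreviation
  set a : ℝ := 3 * (t + c) with hadef
  -- the r-section and its derivative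
  set g : ℝ → ℝ := fun s => e * (3 * (t + c - s ^ 2)) / (s * (3 * (t + c) + s ^ 2) * S)
    with hgdef
  set G : ℝ → ℝ := fun s =>
      e * (3 * s ^ 4 - 6 * a * s ^ 2 - a ^ 2) / (s ^ 2 * (a + s ^ 2) ^ 2 * S) with hGdef
  have hsq : ∀ s : ℝ, HasDerivAt (fun x : ℝ => 3 * (t + c) + x ^ 2) (2 * s) s := by
    intro s
    simpa using (hasDerivAt_pow 2 s).const_add (3 * (t + c))
  have hg : ∀ s : ℝ, s ≠ 0 → 3 * (t + c) + s ^ 2 ≠ 0 → HasDerivAt g (G s) s := by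
    intro s hs hds
    have hNum : HasDerivAt (fun x : ℝ => e * (3 * (t + c - x ^ 2)))
        (e * (3 * (0 - 2 * s))) s := by
      have h1 : HasDerivAt (fun x : ℝ => t + c - x ^ 2) (0 - 2 * s) s := by
        simpa using (hasDerivAt_pow 2 s).const_sub (t + c)
      exact (h1.const_mul 3).const_mul e
    have hDen : HasDerivAt (fun x : ℝ => x * (3 * (t + c) + x ^ 2) * S)
        ((1 * (3 * (t + c) + s ^ 2) + s * (2 * s)) * S) s :=
      ((hasDerivAt_id s).mul (hsq s)).mul_const S
    have hd0 : s * (3 * (t + c) + s ^ 2) * S ≠ 0 := mul_ne_zero (mul_ne_zero hs hds) hS0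
    have h := hNum.div hDen hd0
    refine h.congr_deriv ?_
    rw [hGdef, hadef]
    field_simp
    ring
  -- the second derivative function
  have hNum2 : HasDerivAt (fun x : ℝ => e * (3 * x ^ 4 - 6 * a * x ^ 2 - a ^ 2))
      (e * (3 * (4 * r ^ 3) - 6 * a * (2 * r) - 0)) r := by
    have h1 : HasDerivAt (fun x : ℝ => 3 * x ^ 4 - 6 * a * x ^ 2 - a ^ 2)
        (3 * (4 * r ^ 3) - 6 * a * (2 * r) - 0) r := by
      have := (((hasDerivAt_pow 4 r).const_mul 3).sub
        ((hasDerivAt_pow 2 r).const_mul (6 * a))).sub_const (a ^ 2)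
      simpa using this
    exact h1.const_mul e
  have hden' : a + r ^ 2 ≠ 0 := by rw [hadef]; exact hden
  have hDen2 : HasDerivAt (fun x : ℝ => x ^ 2 * (a + x ^ 2) ^ 2 * S)
      ((2 * r ^ 1 * (a + r ^ 2) ^ 2 + r ^ 2 * (2 * (a + r ^ 2) ^ 1 * (2 * r))) * S) r := by
    have h2 : HasDerivAt (fun x : ℝ => a + x ^ 2) (2 * r) r := by
      rw [hadef]; exact hsq r
    exact ((hasDerivAt_pow 2 r).mul (h2.pow 2)).mul_const S
  have hd20 : r ^ 2 * (a + r ^ 2) ^ 2 * S ≠ 0 :=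
    mul_ne_zero (mul_ne_zero (pow_ne_zero 2 hr0) (pow_ne_zero 2 hden')) hS0
  have hG : HasDerivAt G
      ((e * (3 * (4 * r ^ 3) - 6 * a * (2 * r) - 0) * (r ^ 2 * (a + r ^ 2) ^ 2 * S)
          - e * (3 * r ^ 4 - 6 * a * r ^ 2 - a ^ 2)
            * ((2 * r ^ 1 * (a + r ^ 2) ^ 2 + r ^ 2 * (2 * (a + r ^ 2) ^ 1 * (2 * r))) * S))
        / (r ^ 2 * (a + r ^ 2) ^ 2 * S) ^ 2) r := hNum2.div hDen2 hd20
  -- pdt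
  have hNT : HasDerivAt (fun x : ℝ => e * (3 * (x + c - r ^ 2))) (e * (3 * 1)) t := by
    have h1 : HasDerivAt (fun x : ℝ => x + c - r ^ 2) 1 t := by
      simpa using ((hasDerivAt_id t).add_const c).sub_const (r ^ 2)
    exact (h1.const_mul 3).const_mul e
  have hDT : HasDerivAt (fun x : ℝ => r * (3 * (x + c) + r ^ 2) * S) (r * 3 * S) t := by
    have h1 : HasDerivAt (fun x : ℝ => 3 * (x + c) + r ^ 2) 3 t := by
      simpa using ((((hasDerivAt_id t).add_const c).const_mul 3)).add_const (r ^ 2)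
    have := (h1.const_mul r).mul_const S
    simpa [mul_assoc] using this
  have hdT0 : r * (3 * (t + c) + r ^ 2) * S ≠ 0 := mul_ne_zero (mul_ne_zero hr0 hden) hS0
  have hT := hNT.div hDT hdT0
  -- now compute the three partial derivatives
  have hpdt : pdt (fun p : ℝ × ℝ =>
      e * (3 * (p.1 + c - p.2 ^ 2)) / (p.2 * (3 * (p.1 + c) + p.2 ^ 2) * S)) (t, r)
      = (e * (3 * 1) * (r * (3 * (t + c) + r ^ 2) * S)
          - e * (3 * (t + c - r ^ 2)) * (r * 3 * S)) / (r * (3 * (t + c) + r ^ 2) * S) ^ 2 := by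
    simpa [pdt, Pi.div_def] using hT.deriv
  have hpdr : pdr (fun p : ℝ × ℝ =>
      e * (3 * (p.1 + c - p.2 ^ 2)) / (p.2 * (3 * (p.1 + c) + p.2 ^ 2) * S)) (t, r) = G r := by
    simpa [pdr, hgdef] using (hg r hr0 hden).deriv
  have hpdrr : pdrr (fun p : ℝ × ℝ =>
      e * (3 * (p.1 + c - p.2 ^ 2)) / (p.2 * (3 * (p.1 + c) + p.2 ^ 2) * S)) (t, r)
      = deriv G r := by
    have hU : IsOpen {s : ℝ | s ≠ 0 ∧ 3 * (t + c) + s ^ 2 ≠ 0} := by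
      have h1 : IsOpen {s : ℝ | s ≠ 0} := isOpen_ne
      have h2 : IsOpen {s : ℝ | 3 * (t + c) + s ^ 2 ≠ 0} :=
        isOpen_ne.preimage (by continuity) (f := fun s : ℝ => 3 * (t + c) + s ^ 2)
      exact h1.inter h2
    have hev : (fun s => deriv (fun s' : ℝ =>
        e * (3 * (t + c - s' ^ 2)) / (s' * (3 * (t + c) + s' ^ 2) * S)) s) =ᶠ[nhds r] G := by
      filter_upwards [hU.mem_nhds ⟨hr0, hden⟩] with s hs
      simpa [hgdef] using (hg s hs.1 hs.2).deriv
    simpa [pdrr] using hev.deriv_eq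
  -- assemble
  rw [HeatEqCubic, hpdt, hpdr, hpdrr, hG.deriv]
  have hu3 : (e * (3 * (t + c - r ^ 2)) / (r * (3 * (t + c) + r ^ 2) * S)) ^ 3
      = e * (3 * (t + c - r ^ 2)) ^ 3
        / (r ^ 3 * (3 * (t + c) + r ^ 2) ^ 3 * (-2 * k * S)) := by
    have he3 : e ^ 3 = e := by rcases he with h | h <;> rw [h] <;> norm_num
    have hS3 : S ^ 3 = -2 * k * S := by rw [pow_succ, hS2]
    have h1 : (e * (3 * (t + c - r ^ 2))) ^ 3 = e * (3 * (t + c - r ^ 2)) ^ 3 := by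
      rw [mul_pow, he3]
    have h2 : (r * (3 * (t + c) + r ^ 2) * S) ^ 3
        = r ^ 3 * (3 * (t + c) + r ^ 2) ^ 3 * (-2 * k * S) := by
      rw [mul_pow, mul_pow, hS3]
    rw [div_pow, h1, h2]
  simp only [hu3, hGdef]
  rw [hadef]
  have h2k : (-2 : ℝ) * k ≠ 0 := mul_ne_zero (by norm_num) hk0
  have hden3 : 3 * (t + c) + r ^ 2 ≠ 0 := hden
  field_simp
  ring
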